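/- Let w and u be positive integers with w even and u odd, and let L be an even graph of order u with |E(L)| = w(u−w+1)/2. Suppose W is a w-element set disjoint from V(L) and D is a K_3-decomposition of L ∨ K_W. Then every triangle of D contains either exactly one or exactly two vertices of V(L); moreover exactly |E(L)| triangles contain two vertices of V(L) and exactly C(w,2) triangles contain one vertex of V(L). -/

import Mathlib

/-- A triangle of a simple graph, represented as a 3-element vertex set. -/
def IsTriangleOf {V : Type*} (G : SimpleGraph V) (T : Finset V) : Prop :=
  T.card = 3 ∧ ∀ x ∈ T, ∀ y ∈ T, x ≠ y → G.Adj x y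

/-- A K₃-decomposition: every edge lies in exactly one triangle of the family. -/
def IsTriangleDecomposition {V : Type*} (G : SimpleGraph V) (D : Set (Finset V)) : Prop :=
  (∀ T ∈ D, IsTriangleOf G T) ∧
  ∀ x y : V, G.Adj x y → ∃! T, T ∈ D ∧ x ∈ T ∧ y ∈ T

/-- A K₃-packing: pairwise edge-disjoint triangles. -/
def IsTrianglePacking {V : Type*} (G : SimpleGraph V) (D : Set (Finset V)) : Prop :=
  (∀ T ∈ D, IsTriangleOf G T) ∧
  ∀ x y : V, x ≠ y → ∀ T₁ ∈ D, ∀ T₂ ∈ D,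
    x ∈ T₁ → y ∈ T₁ → x ∈ T₂ → y ∈ T₂ → T₁ = T₂

/-- A proper edge colouring: distinct incident edges receive distinct colours. -/
def IsProperEdgeColoring {V β : Type*} (G : SimpleGraph V) (c : Sym2 V → β) : Prop :=
  ∀ e₁ ∈ G.edgeSet, ∀ e₂ ∈ G.edgeSet, e₁ ≠ e₂ → (∃ v, v ∈ e₁ ∧ v ∈ e₂) → c e₁ ≠ c e₂

/-- The join `L ∨ K_w` with a complete graph on `w` new vertices (`Fin w`). -/
def joinK {V : Type*} (L : SimpleGraph V) (w : ℕ) : SimpleGraph (V ⊕ Fin w) where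
  Adj x y := match x, y with
    | Sum.inl a, Sum.inl b => L.Adj a b
    | Sum.inl _, Sum.inr _ => True
    | Sum.inr _, Sum.inl _ => True
    | Sum.inr a, Sum.inr b => a ≠ b
  symm := by
    refine ⟨?_⟩
    intro x y h
    cases x <;> cases y <;> simp_all
    · exact h.symm
    · exact fun h' => h h'.symm
  loopless := by
    refine ⟨?_⟩
    intro x
    cases x <;> simp_all

section Aux

open Finset

variable {V : Type*} [Fintype V] {w : ℕ}

lemma card_inl_filter [DecidableEq V] (T : Finset (V ⊕ Fin w)) :
    (Finset.univ.filter fun a : V => Sum.inl a ∈ T).card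
      = (T.filter fun x => x.isLeft = true).card := by
  classical
  apply Finset.card_bij (fun a _ => Sum.inl a)
  · intro a ha
    simp only [Finset.mem_filter, Finset.mem_univ, true_and] at ha ⊢
    exact ⟨ha, rfl⟩
  · intro a _ b _ h
    exact Sum.inl.inj h
  · intro x hx
    simp only [Finset.mem_filter] at hx
    obtain ⟨hxT, hL⟩ := hx
    obtain ⟨a, rfl⟩ := Sum.isLeft_iff.mp hL
    exact ⟨a, by simpa using hxT, rfl⟩

lemma card_inr_filter [DecidableEq V] (T : Finset (V ⊕ Fin w)) :
    (Finset.univ.filter fun b : Fin w => Sum.inr b ∈ T).card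
      = (T.filter fun x => x.isLeft = false).card := by
  classical
  apply Finset.card_bij (fun b _ => (Sum.inr b : V ⊕ Fin w))
  · intro b hb
    simp only [Finset.mem_filter, Finset.mem_univ, true_and] at hb ⊢
    exact ⟨hb, rfl⟩
  · intro a _ b _ h
    exact Sum.inr.inj h
  · intro x hx
    simp only [Finset.mem_filter] at hx
    obtain ⟨hxT, hL⟩ := hx
    obtain ⟨b, rfl⟩ := Sum.isRight_iff.mp (by simpa using hL)
    exact ⟨b, by simpa using hxT, rfl⟩

end Aux

set_option maxHeartbeats 1000000 in
/-- If `w` is even and positive, `u = |V(L)|` is odd, `L` is even with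
`|E(L)| = w(u-w+1)/2`, and `D` is a K₃-decomposition of `L ∨ K_w`, then every triangle of
`D` has exactly one or two vertices in `V(L)`, exactly `|E(L)|` triangles have two
vertices in `V(L)`, and exactly `C(w,2)` triangles have one vertex in `V(L)`. -/
theorem stmt5 {V : Type*} [Fintype V] (L : SimpleGraph V) (w : ℕ)
    (hwpos : 0 < w) (hwe : Even w) (hodd : Odd (Fintype.card V))
    (heven : ∀ v : V, Even (L.neighborSet v).ncard)
    (hE : (L.edgeSet.ncard : ℤ) * 2 = w * ((Fintype.card V : ℤ) - w + 1))
    (D : Set (Finset (V ⊕ Fin w))) (hD : IsTriangleDecomposition (joinK L w) D) :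
    (∀ T ∈ D, (T.filter (fun x => x.isLeft = true)).card = 1 ∨
      (T.filter (fun x => x.isLeft = true)).card = 2) ∧
    {T ∈ D | (T.filter (fun x => x.isLeft = true)).card = 2}.ncard = L.edgeSet.ncard ∧
    {T ∈ D | (T.filter (fun x => x.isLeft = true)).card = 1}.ncard = w.choose 2 := by
  classical
  obtain ⟨hDtri, hDuniq⟩ := hD
  set u := Fintype.card V with hu
  have hfin : D.Finite := Set.toFinite D
  set 𝒟 : Finset (Finset (V ⊕ Fin w)) := hfin.toFinset with h𝒟
  have hmem : ∀ T, T ∈ 𝒟 ↔ T ∈ D := fun T => hfin.mem_toFinset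
  have key : ∀ x y : V ⊕ Fin w, (joinK L w).Adj x y →
      ∃ T, (T ∈ D ∧ x ∈ T ∧ y ∈ T) ∧ ∀ T' ∈ D, x ∈ T' → y ∈ T' → T' = T := by
    intro x y h
    obtain ⟨T, hT, hunq⟩ := hDuniq x y h
    exact ⟨T, hT, fun T' h1 h2 h3 => hunq T' ⟨h1, h2, h3⟩⟩
  set ℓ : Finset (V ⊕ Fin w) → ℕ := fun T => (T.filter fun x => x.isLeft = true).card
    with hℓdef
  have hcard3 : ∀ T ∈ D, T.card = 3 := fun T hT => (hDtri T hT).1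
  have hℓle : ∀ T ∈ D, ℓ T ≤ 3 := by
    intro T hT
    calc ℓ T ≤ T.card := Finset.card_filter_le _ _
    _ = 3 := hcard3 T hT
  have hsplit : ∀ T ∈ D, (T.filter fun x => x.isLeft = false).card = 3 - ℓ T := by
    intro T hT
    have h1 := Finset.card_filter_add_card_filter_not
      (s := T) (p := fun x => x.isLeft = true)
    simp only [Bool.not_eq_true] at h1
    have h2 := hcard3 T hT
    have h3 := hℓle T hT
    have h4 : ℓ T = (T.filter fun x => x.isLeft = true).card := rfl
    omega
  -- cross edges
  choose fC hfC using fun p : V × Fin w => key (Sum.inl p.1) (Sum.inr p.2) trivial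
  have hcross_total : (Finset.univ : Finset (V × Fin w)).card
      = ∑ T ∈ 𝒟, ((Finset.univ : Finset (V × Fin w)).filter (fun p => fC p = T)).card :=
    Finset.card_eq_sum_card_fiberwise (fun p _ => (hmem _).mpr (hfC p).1.1)
  have hcross_fiber : ∀ T ∈ D,
      ((Finset.univ : Finset (V × Fin w)).filter (fun p => fC p = T)).card
        = ℓ T * (3 - ℓ T) := by
    intro T hT
    have hset : (Finset.univ : Finset (V × Fin w)).filter (fun p => fC p = T)
        = (Finset.univ.filter fun a : V => Sum.inl a ∈ T) ×ˢ
          (Finset.univ.filter fun b : Fin w => Sum.inr b ∈ T) := by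
      ext p
      simp only [Finset.mem_filter, Finset.mem_univ, true_and, Finset.mem_product]
      constructor
      · rintro rfl
        exact ⟨(hfC p).1.2.1, (hfC p).1.2.2⟩
      · rintro ⟨h1, h2⟩
        exact ((hfC p).2 T hT h1 h2).symm
    rw [hset, Finset.card_product, card_inl_filter, card_inr_filter, hsplit T hT]
  -- L-edges via darts
  have hLadj : ∀ {a b : V}, L.Adj a b → (joinK L w).Adj (Sum.inl a) (Sum.inl b) := fun h => h
  choose fL hfL using fun d : L.Dart => key (Sum.inl d.fst) (Sum.inl d.snd) (hLadj d.adj)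
  have hL_total : (Finset.univ : Finset L.Dart).card
      = ∑ T ∈ 𝒟, ((Finset.univ : Finset L.Dart).filter (fun d => fL d = T)).card :=
    Finset.card_eq_sum_card_fiberwise (fun d _ => (hmem _).mpr (hfL d).1.1)
  have hL_fiber : ∀ T ∈ D,
      ((Finset.univ : Finset L.Dart).filter (fun d => fL d = T)).card
        = ℓ T * ℓ T - ℓ T := by
    intro T hT
    have hbij : ((Finset.univ : Finset L.Dart).filter (fun d => fL d = T)).card
        = (Finset.univ.filter fun a : V => Sum.inl a ∈ T).offDiag.card := by
      apply Finset.card_bij (fun d _ => (d.fst, d.snd))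
      · intro d hd
        simp only [Finset.mem_filter, Finset.mem_univ, true_and] at hd
        have h1 : Sum.inl d.fst ∈ T := hd ▸ (hfL d).1.2.1
        have h2 : Sum.inl d.snd ∈ T := hd ▸ (hfL d).1.2.2
        simp only [Finset.mem_offDiag, Finset.mem_filter, Finset.mem_univ, true_and]
        exact ⟨h1, h2, d.adj.ne⟩
      · intro d1 _ d2 _ h
        exact SimpleGraph.Dart.ext _ _ (Prod.ext (congrArg Prod.fst h) (congrArg Prod.snd h))
      · rintro ⟨a, b⟩ hp
        simp only [Finset.mem_offDiag, Finset.mem_filter, Finset.mem_univ, true_and] at hp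
        obtain ⟨h1, h2, hne⟩ := hp
        have hadj : L.Adj a b :=
          (hDtri T hT).2 _ h1 _ h2 (fun h => hne (Sum.inl.inj h))
        refine ⟨⟨(a, b), hadj⟩, ?_, rfl⟩
        simp only [Finset.mem_filter, Finset.mem_univ, true_and]
        exact ((hfL ⟨(a, b), hadj⟩).2 T hT h1 h2).symm
    rw [hbij, Finset.offDiag_card, card_inl_filter]
  -- pure right edges via darts of ⊤ on Fin w
  have hRadj : ∀ {a b : Fin w}, a ≠ b → (joinK L w).Adj (Sum.inr a) (Sum.inr b) := fun h => h
  choose fR hfR using fun d : (⊤ : SimpleGraph (Fin w)).Dart =>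
    key (Sum.inr d.fst) (Sum.inr d.snd) (hRadj d.adj)
  have hR_total : (Finset.univ : Finset (⊤ : SimpleGraph (Fin w)).Dart).card
      = ∑ T ∈ 𝒟, ((Finset.univ : Finset (⊤ : SimpleGraph (Fin w)).Dart).filter
          (fun d => fR d = T)).card :=
    Finset.card_eq_sum_card_fiberwise (fun d _ => (hmem _).mpr (hfR d).1.1)
  have hR_fiber : ∀ T ∈ D,
      ((Finset.univ : Finset (⊤ : SimpleGraph (Fin w)).Dart).filter (fun d => fR d = T)).card
        = (3 - ℓ T) * (3 - ℓ T) - (3 - ℓ T) := by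
    intro T hT
    have hbij : ((Finset.univ : Finset (⊤ : SimpleGraph (Fin w)).Dart).filter
          (fun d => fR d = T)).card
        = (Finset.univ.filter fun b : Fin w => Sum.inr b ∈ T).offDiag.card := by
      apply Finset.card_bij (fun d _ => (d.fst, d.snd))
      · intro d hd
        simp only [Finset.mem_filter, Finset.mem_univ, true_and] at hd
        have h1 : Sum.inr d.fst ∈ T := hd ▸ (hfR d).1.2.1
        have h2 : Sum.inr d.snd ∈ T := hd ▸ (hfR d).1.2.2
        simp only [Finset.mem_offDiag, Finset.mem_filter, Finset.mem_univ, true_and]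
        exact ⟨h1, h2, d.adj.ne⟩
      · intro d1 _ d2 _ h
        exact SimpleGraph.Dart.ext _ _ (Prod.ext (congrArg Prod.fst h) (congrArg Prod.snd h))
      · rintro ⟨a, b⟩ hp
        simp only [Finset.mem_offDiag, Finset.mem_filter, Finset.mem_univ, true_and] at hp
        obtain ⟨h1, h2, hne⟩ := hp
        have hadj : (⊤ : SimpleGraph (Fin w)).Adj a b := hne
        refine ⟨⟨(a, b), hadj⟩, ?_, rfl⟩
        simp only [Finset.mem_filter, Finset.mem_univ, true_and]
        exact ((hfR ⟨(a, b), hadj⟩).2 T hT h1 h2).symm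
    rw [hbij, Finset.offDiag_card, card_inr_filter, hsplit T hT]
  -- the three sums
  have hS1 : ∑ T ∈ 𝒟, ℓ T * (3 - ℓ T) = u * w := by
    rw [← Finset.sum_congr rfl (fun T hT => hcross_fiber T ((hmem T).mp hT)),
      ← hcross_total]
    simp [hu]
  have hS2 : ∑ T ∈ 𝒟, (ℓ T * ℓ T - ℓ T) = 2 * L.edgeFinset.card := by
    rw [← Finset.sum_congr rfl (fun T hT => hL_fiber T ((hmem T).mp hT)), ← hL_total,
      Finset.card_univ, SimpleGraph.dart_card_eq_twice_card_edges]
  have hS3 : ∑ T ∈ 𝒟, ((3 - ℓ T) * (3 - ℓ T) - (3 - ℓ T)) = 2 * w.choose 2 := by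
    rw [← Finset.sum_congr rfl (fun T hT => hR_fiber T ((hmem T).mp hT)), ← hR_total,
      Finset.card_univ, SimpleGraph.dart_card_eq_twice_card_edges,
      SimpleGraph.card_edgeFinset_top_eq_card_choose_two, Fintype.card_fin]
  -- combine: 6 per triangle
  have h6 : 2 * (u * w) + 2 * L.edgeFinset.card + 2 * w.choose 2 = 6 * 𝒟.card := by
    have hpt : ∀ T ∈ 𝒟, 2 * (ℓ T * (3 - ℓ T)) + ((ℓ T * ℓ T - ℓ T)
        + ((3 - ℓ T) * (3 - ℓ T) - (3 - ℓ T))) = 6 := by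
      intro T hT
      have h3 := hℓle T ((hmem T).mp hT)
      interval_cases h : (ℓ T) <;> rfl
    calc 2 * (u * w) + 2 * L.edgeFinset.card + 2 * w.choose 2
        = 2 * (∑ T ∈ 𝒟, ℓ T * (3 - ℓ T)) + ((∑ T ∈ 𝒟, (ℓ T * ℓ T - ℓ T))
          + (∑ T ∈ 𝒟, ((3 - ℓ T) * (3 - ℓ T) - (3 - ℓ T)))) := by
          rw [hS1, hS2, hS3]; ring
      _ = ∑ T ∈ 𝒟, (2 * (ℓ T * (3 - ℓ T)) + ((ℓ T * ℓ T - ℓ T)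
          + ((3 - ℓ T) * (3 - ℓ T) - (3 - ℓ T)))) := by
          rw [Finset.mul_sum, ← Finset.sum_add_distrib, ← Finset.sum_add_distrib]
      _ = ∑ T ∈ 𝒟, 6 := Finset.sum_congr rfl hpt
      _ = 6 * 𝒟.card := by rw [Finset.sum_const]; ring
  -- arithmetic: u*w = 2*|𝒟|
  have hEF : L.edgeFinset.card = L.edgeSet.ncard := (Set.ncard_eq_toFinset_card' _).symm
  have hch : 2 * w.choose 2 = w * w - w := by
    have h1 : w.choose 2 = w * (w - 1) / 2 := Nat.choose_two_right w
    have h2 : Even (w * (w - 1)) := by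
      rcases Nat.even_or_odd w with h | h
      · exact h.mul_right _
      · exact (Nat.Odd.sub_odd h odd_one).mul_left _
    obtain ⟨k, hk⟩ := h2
    have hw1 : w * (w - 1) = w * w - w := by
      rw [Nat.mul_sub, Nat.mul_one]
    omega
  have huw : u * w = 2 * 𝒟.card := by
    have hEcast : (L.edgeFinset.card : ℤ) * 2 = w * ((u : ℤ) - w + 1) := by
      rw [hEF]; exact hE
    have hcast : (2 : ℤ) * (u * w) + 2 * L.edgeFinset.card + 2 * w.choose 2
        = 6 * 𝒟.card := by exact_mod_cast h6
    have hchz : (2 : ℤ) * w.choose 2 = w * w - w := by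
      have : ((2 * w.choose 2 : ℕ) : ℤ) = ((w * w - w : ℕ) : ℤ) := by rw [hch]
      rw [Nat.cast_sub (Nat.le_mul_of_pos_left w hwpos)] at this
      push_cast at this ⊢
      linarith
    have hcomm : (u : ℤ) * w = w * u := mul_comm _ _
    have : (u : ℤ) * w = 2 * 𝒟.card := by linarith [hcast, hEcast, hchz, hcomm]
    exact_mod_cast this
  -- all triangles have ℓ ∈ {1,2}
  have hall : ∀ T ∈ 𝒟, ℓ T * (3 - ℓ T) = 2 := by
    have hle2 : ∀ T ∈ 𝒟, ℓ T * (3 - ℓ T) ≤ 2 := by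
      intro T hT
      have h3 := hℓle T ((hmem T).mp hT)
      interval_cases h : (ℓ T) <;> norm_num
    have hsum : ∑ T ∈ 𝒟, ℓ T * (3 - ℓ T) = ∑ T ∈ 𝒟, 2 := by
      rw [hS1, Finset.sum_const, smul_eq_mul, huw]; ring
    exact fun T hT => (Finset.sum_eq_sum_iff_of_le hle2).mp hsum T hT
  have hall12 : ∀ T ∈ D, ℓ T = 1 ∨ ℓ T = 2 := by
    intro T hT
    have h1 := hall T ((hmem T).mpr hT)
    have h3 := hℓle T hT
    interval_cases h : (ℓ T) <;> omega
  refine ⟨hall12, ?_, ?_⟩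
  · -- count of ℓ = 2 triangles
    have hsetE : {T ∈ D | (T.filter (fun x => x.isLeft = true)).card = 2}
        = ↑(𝒟.filter fun T => ℓ T = 2) := by
      ext T
      simp only [Set.mem_setOf_eq, Finset.coe_filter, hmem, hℓdef]
    rw [hsetE, Set.ncard_coe_finset]
    have h2 : ∑ T ∈ 𝒟, (ℓ T * ℓ T - ℓ T)
        = ∑ T ∈ 𝒟, (if ℓ T = 2 then 2 else 0) := by
      refine Finset.sum_congr rfl fun T hT => ?_
      rcases hall12 T ((hmem T).mp hT) with h | h <;> simp [h]
    rw [hS2, ← Finset.sum_filter] at h2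
    rw [Finset.sum_const, smul_eq_mul] at h2
    omega
  · have hsetW : {T ∈ D | (T.filter (fun x => x.isLeft = true)).card = 1}
        = ↑(𝒟.filter fun T => ℓ T = 1) := by
      ext T
      simp only [Set.mem_setOf_eq, Finset.coe_filter, hmem, hℓdef]
    rw [hsetW, Set.ncard_coe_finset]
    have h2 : ∑ T ∈ 𝒟, ((3 - ℓ T) * (3 - ℓ T) - (3 - ℓ T))
        = ∑ T ∈ 𝒟, (if ℓ T = 1 then 2 else 0) := by
      refine Finset.sum_congr rfl fun T hT => ?_
      rcases hall12 T ((hmem T).mp hT) with h | h <;> simp [h]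
    rw [hS3, ← Finset.sum_filter] at h2
    rw [Finset.sum_const, smul_eq_mul] at h2
    omega
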